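/- For every real α with 0 < α ≤ 1 and every real x with 0 < x and (2+x)·ln(2+x) − x·ln x ≤ 2, the upper incomplete gamma function satisfies Γ(α, x) ≥ e^{−x}, i.e., ∫_x^∞ e^{−u}·u^{α−1} du ≥ e^{−x}. -/

import Mathlib

open Real MeasureTheory Set Filter Topology


lemma hasDerivAt_negexp (u : ℝ) :
    HasDerivAt (fun t : ℝ => -Real.exp (-t)) (Real.exp (-u)) u := by
  have h : HasDerivAt (fun t : ℝ => Real.exp (-t)) (-Real.exp (-u)) u := by
    simpa [Function.comp_def] using (Real.hasDerivAt_exp (-u)).comp u (hasDerivAt_neg u)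
  have := h.neg; rw [neg_neg] at this; exact this

lemma hasDerivAt_F1 (u : ℝ) :
    HasDerivAt (fun t : ℝ => -(t + 1) * Real.exp (-t)) (u * Real.exp (-u)) u := by
  have h1 : HasDerivAt (fun t : ℝ => -(t + 1)) (-1 : ℝ) u := by
    exact ((hasDerivAt_id u).add_const 1).neg
  have h2 : HasDerivAt (fun t : ℝ => Real.exp (-t)) (-Real.exp (-u)) u := by
    simpa [Function.comp_def] using (Real.hasDerivAt_exp (-u)).comp u (hasDerivAt_neg u)
  have := h1.mul h2
  exact this.congr_deriv (by ring)

lemma int_exp_neg (a b : ℝ) :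
    ∫ u in a..b, Real.exp (-u) = Real.exp (-a) - Real.exp (-b) := by
  have := intervalIntegral.integral_eq_sub_of_hasDerivAt
    (a := a) (b := b) (f := fun t : ℝ => -Real.exp (-t)) (f' := fun t : ℝ => Real.exp (-t))
    (fun u _ => hasDerivAt_negexp u)
    (((Real.continuous_exp.comp continuous_neg).continuousOn).intervalIntegrable)
  rw [this]; ring

lemma int_u_exp_neg (a b : ℝ) :
    ∫ u in a..b, u * Real.exp (-u) = (a + 1) * Real.exp (-a) - (b + 1) * Real.exp (-b) := by
  have := intervalIntegral.integral_eq_sub_of_hasDerivAt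
    (a := a) (b := b) (f := fun t : ℝ => -(t + 1) * Real.exp (-t)) (f' := fun t : ℝ => t * Real.exp (-t))
    (fun u _ => hasDerivAt_F1 u)
    (((continuous_id.mul (Real.continuous_exp.comp continuous_neg)).continuousOn).intervalIntegrable)
  rw [this]; ring

lemma tendsto_F1 : Tendsto (fun t : ℝ => -(t + 1) * Real.exp (-t)) atTop (𝓝 0) := by
  have h1 : Tendsto (fun t : ℝ => t ^ 1 * Real.exp (-t)) atTop (𝓝 0) :=
    tendsto_pow_mul_exp_neg_atTop_nhds_zero 1
  have h2 := Real.tendsto_exp_neg_atTop_nhds_zero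
  have := (h1.neg.sub h2)
  simp only [neg_zero, sub_zero, pow_one] at this
  refine this.congr fun t => ?_
  ring

lemma integrableOn_u_exp_neg {a : ℝ} (ha : 0 ≤ a) :
    IntegrableOn (fun u : ℝ => u * Real.exp (-u)) (Ioi a) := by
  refine integrableOn_Ioi_deriv_of_nonneg' (g := fun t : ℝ => -(t + 1) * Real.exp (-t))
    (fun x _ => hasDerivAt_F1 x) (fun x hx => ?_) tendsto_F1
  exact mul_nonneg (le_of_lt (lt_of_le_of_lt ha hx)) (Real.exp_pos _).le

lemma int_Ioi_u_exp_neg {a : ℝ} (ha : 0 ≤ a) :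
    ∫ u in Ioi a, u * Real.exp (-u) = (a + 1) * Real.exp (-a) := by
  have := integral_Ioi_of_hasDerivAt_of_nonneg' (g := fun t : ℝ => -(t + 1) * Real.exp (-t))
    (g' := fun t : ℝ => t * Real.exp (-t))
    (fun x _ => hasDerivAt_F1 x) (fun x hx => mul_nonneg (le_of_lt (lt_of_le_of_lt ha hx)) (Real.exp_pos _).le)
    tendsto_F1
  rw [this]; ring

lemma integrableOn_exp_neg' {a : ℝ} : IntegrableOn (fun u : ℝ => Real.exp (-u)) (Ioi a) := by
  have := exp_neg_integrableOn_Ioi a (b := 1) one_pos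
  simpa using this


lemma integrableOn_exp_neg_log {x : ℝ} (hx : 0 < x) :
    IntegrableOn (fun u : ℝ => Real.exp (-u) * Real.log u) (Ioi x) := by
  refine Integrable.mono'
    (g := fun u : ℝ => |Real.log x| * Real.exp (-u) + u * Real.exp (-u))
    (((integrableOn_exp_neg' (a := x)).const_mul _).add (integrableOn_u_exp_neg hx.le))
    (((Real.measurable_exp.comp measurable_neg).mul Real.measurable_log).aestronglyMeasurable)
    ?_
  rw [ae_restrict_iff' measurableSet_Ioi]
  filter_upwards with u hu
  have hu0 : 0 < u := lt_trans hx hu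
  have hlog : |Real.log u| ≤ |Real.log x| + u := by
    rcases le_or_gt 1 u with h1 | h1
    · have : Real.log u ≤ u := (Real.log_le_sub_one_of_pos hu0).trans (by linarith)
      rw [abs_of_nonneg (Real.log_nonneg h1)]
      have := abs_nonneg (Real.log x); linarith
    · have hlu : Real.log u ≤ 0 := Real.log_nonpos hu0.le h1.le
      have hlx : Real.log x ≤ Real.log u := Real.log_le_log hx hu.le
      rw [abs_of_nonpos hlu]
      have : -Real.log u ≤ -Real.log x := by linarith
      calc -Real.log u ≤ -Real.log x := this
        _ ≤ |Real.log x| := neg_le_abs _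
        _ ≤ |Real.log x| + u := by linarith
  have : ‖Real.exp (-u) * Real.log u‖ = Real.exp (-u) * |Real.log u| := by
    rw [norm_mul, Real.norm_eq_abs, Real.norm_eq_abs, abs_of_pos (Real.exp_pos _)]
  rw [this]
  calc Real.exp (-u) * |Real.log u| ≤ Real.exp (-u) * (|Real.log x| + u) :=
        mul_le_mul_of_nonneg_left hlog (Real.exp_pos _).le
    _ = |Real.log x| * Real.exp (-u) + u * Real.exp (-u) := by ring


-- lower bound for log of a quotient-shifted value: log (2 + x) monotonicity helpers
lemma x_le_fifth {x : ℝ} (hx : 0 < x)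
    (h : (2 + x) * Real.log (2 + x) - x * Real.log x ≤ 2) : x ≤ 1/5 := by
  by_contra hc
  push_neg at hc
  have l2 : (0.6931471803 : ℝ) < Real.log 2 := Real.log_two_gt_d9
  have key : (2 : ℝ) < (2 + x) * Real.log (2 + x) - x * Real.log x := by
    have hmono : ∀ a : ℝ, 1 ≤ a → a ≤ 2 + x → a * Real.log a ≤ (2 + x) * Real.log (2 + x) := by
      intro a ha hax
      have h1 : Real.log a ≤ Real.log (2 + x) := Real.log_le_log (by linarith) hax
      have h2 : 0 ≤ Real.log a := Real.log_nonneg ha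
      nlinarith
    -- helper lower bounds for logs
    have hlog_ge : ∀ y : ℝ, 0 < y → 1 - y⁻¹ ≤ Real.log y := fun y hy =>
      Real.one_sub_inv_le_log_of_pos hy
    rcases le_or_gt x 1 with hx1 | hx1
    · rcases le_or_gt x (2/5) with hx4 | hx4
      · -- log (2+a) ≥ log 2 + log ((2+a)/2)
        have hsplit : ∀ a : ℝ, 0 < a → Real.log (2 + a) = Real.log 2 + Real.log (1 + a/2) := by
          intro a ha
          rw [← Real.log_mul (by norm_num) (by linarith)]
          ring_nf
        rcases le_or_gt x (1/4) with hx2 | hx2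
        · -- x ∈ (1/5, 1/4]
          have hA : (2.2 : ℝ) * Real.log 2.2 ≤ (2 + x) * Real.log (2 + x) := by
            have := hmono 2.2 (by norm_num) (by linarith)
            simpa using this
          have hlogA : Real.log 2.2 ≥ Real.log 2 + 1/11 := by
            have h1 := hsplit 0.2 (by norm_num)
            have h2 := hlog_ge (1 + 0.2/2) (by norm_num)
            norm_num at h1 h2 ⊢
            linarith
          have hB : x * (2 * Real.log 2) ≤ x * Real.log x⁻¹ := by
            have : (4 : ℝ) ≤ x⁻¹ := by
              rw [le_inv_comm₀] <;> norm_num <;> linarith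
            have h4 : Real.log 4 ≤ Real.log x⁻¹ := Real.log_le_log (by norm_num) this
            have : Real.log 4 = 2 * Real.log 2 := by
              rw [show (4:ℝ) = 2^2 by norm_num, Real.log_pow]; push_cast; ring
            nlinarith
          have hBx : x * Real.log x⁻¹ = -(x * Real.log x) := by
            rw [Real.log_inv]; ring
          nlinarith
        · rcases le_or_gt x (3/10) with hx3 | hx3
          · -- x ∈ (1/4, 3/10]
            have hA : (2.25 : ℝ) * Real.log 2.25 ≤ (2 + x) * Real.log (2 + x) := by
              have := hmono 2.25 (by norm_num) (by linarith)
              simpa using this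
            have hlogA : Real.log 2.25 ≥ Real.log 2 + 1/9 := by
              have h1 := hsplit 0.25 (by norm_num)
              have h2 := hlog_ge (1 + 0.25/2) (by norm_num)
              norm_num at h1 h2 ⊢
              linarith
            have hinv : (10/3 : ℝ) ≤ x⁻¹ := by
              rw [le_inv_comm₀] <;> norm_num <;> linarith
            have hlogB : Real.log 2 + 2/5 ≤ Real.log x⁻¹ := by
              have h4 : Real.log (10/3) ≤ Real.log x⁻¹ := Real.log_le_log (by norm_num) hinv
              have h5 : Real.log (10/3) = Real.log 2 + Real.log (5/3) := by
                rw [← Real.log_mul (by norm_num) (by norm_num)]; norm_num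
              have h6 := hlog_ge (5/3) (by norm_num)
              norm_num at h6
              linarith
            have hB : x * (Real.log 2 + 2/5) ≤ x * Real.log x⁻¹ :=
              mul_le_mul_of_nonneg_left hlogB (by linarith)
            have hBx : x * Real.log x⁻¹ = -(x * Real.log x) := by
              rw [Real.log_inv]; ring
            nlinarith
          · -- x ∈ (3/10, 2/5]
            have hA : (2.3 : ℝ) * Real.log 2.3 ≤ (2 + x) * Real.log (2 + x) := by
              have := hmono 2.3 (by norm_num) (by linarith)
              simpa using this
            have hlogA : Real.log 2.3 ≥ Real.log 2 + 3/23 := by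
              have h1 := hsplit 0.3 (by norm_num)
              have h2 := hlog_ge (1 + 0.3/2) (by norm_num)
              norm_num at h1 h2 ⊢
              linarith
            have hinv : (5/2 : ℝ) ≤ x⁻¹ := by
              rw [le_inv_comm₀] <;> norm_num <;> linarith
            have hlogB : Real.log 2 + 1/5 ≤ Real.log x⁻¹ := by
              have h4 : Real.log (5/2) ≤ Real.log x⁻¹ := Real.log_le_log (by norm_num) hinv
              have h5 : Real.log (5/2) = Real.log 2 + Real.log (5/4) := by
                rw [← Real.log_mul (by norm_num) (by norm_num)]; norm_num
              have h6 := hlog_ge (5/4) (by norm_num)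
              norm_num at h6
              linarith
            have hB : x * (Real.log 2 + 1/5) ≤ x * Real.log x⁻¹ :=
              mul_le_mul_of_nonneg_left hlogB (by linarith)
            have hBx : x * Real.log x⁻¹ = -(x * Real.log x) := by
              rw [Real.log_inv]; ring
            nlinarith
      · -- x ∈ (2/5, 1]
        have hA : (2.4 : ℝ) * Real.log 2.4 ≤ (2 + x) * Real.log (2 + x) := by
          have := hmono 2.4 (by norm_num) (by linarith)
          simpa using this
        have hlogA : Real.log 2.4 ≥ Real.log 2 + 1/6 := by
          have h5 : Real.log 2.4 = Real.log 2 + Real.log (6/5) := by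
            rw [← Real.log_mul (by norm_num) (by norm_num)]; norm_num
          have h6 := hlog_ge (6/5) (by norm_num)
          norm_num at h6
          linarith
        have hB : x * Real.log x ≤ 0 :=
          mul_nonpos_of_nonneg_of_nonpos hx.le (Real.log_nonpos hx.le hx1)
        nlinarith
    · -- x > 1
      have hlx : Real.log x ≤ Real.log (2 + x) := Real.log_le_log (by linarith) (by linarith)
      have hl3 : Real.log 3 ≤ Real.log (2 + x) := Real.log_le_log (by norm_num) (by linarith)
      have hlog3 : Real.log 3 ≥ Real.log 2 + 1/3 := by
        have h5 : Real.log 3 = Real.log 2 + Real.log (3/2) := by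
          rw [← Real.log_mul (by norm_num) (by norm_num)]; norm_num
        have h6 := hlog_ge (3/2) (by norm_num)
        norm_num at h6
        linarith
      have hB : x * Real.log x ≤ x * Real.log (2 + x) :=
        mul_le_mul_of_nonneg_left hlx (by linarith)
      nlinarith
  linarith


lemma intervalIntegrable_exp_neg_log {a b : ℝ} (ha : 0 < a) (hb : 0 < b) :
    IntervalIntegrable (fun u : ℝ => Real.exp (-u) * Real.log u) volume a b := by
  apply ContinuousOn.intervalIntegrable
  refine ContinuousOn.mul ((Real.continuous_exp.comp continuous_neg).continuousOn)
    (Real.continuousOn_log.mono ?_)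
  intro u hu
  have : min a b ≤ u := hu.1
  have h0 : 0 < u := lt_of_lt_of_le (lt_min ha hb) this
  simp [ne_of_gt h0]

lemma intervalIntegrable_exp_neg {a b : ℝ} :
    IntervalIntegrable (fun u : ℝ => Real.exp (-u)) volume a b :=
  ((Real.continuous_exp.comp continuous_neg).continuousOn).intervalIntegrable

lemma intervalIntegrable_u_exp_neg {a b : ℝ} :
    IntervalIntegrable (fun u : ℝ => u * Real.exp (-u)) volume a b :=
  ((continuous_id.mul (Real.continuous_exp.comp continuous_neg)).continuousOn).intervalIntegrable

set_option maxHeartbeats 2000000 in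
lemma G_nonpos {x : ℝ} (hx : 0 < x) (hx5 : x ≤ 1/5) :
    (∫ u in Ioi x, Real.exp (-u) * Real.log u) ≤ 0 := by
  -- numeric bounds
  have einv_lo : (0.36787944116 : ℝ) < Real.exp (-1) := Real.exp_neg_one_gt_d9
  have einv_hi : Real.exp (-1) < 0.3678794412 := Real.exp_neg_one_lt_d9
  have l2lo : (0.6931471803 : ℝ) < Real.log 2 := Real.log_two_gt_d9
  have l2hi : Real.log 2 < 0.6931471808 := Real.log_two_lt_d9
  have he2 : Real.exp (-2) = Real.exp (-1) * Real.exp (-1) := by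
    rw [← Real.exp_add]; norm_num
  have he4 : Real.exp (-4) = Real.exp (-2) * Real.exp (-2) := by
    rw [← Real.exp_add]; norm_num
  have e2lo : (0.13533528322 : ℝ) < Real.exp (-2) := by rw [he2]; nlinarith
  have e2hi : Real.exp (-2) < 0.13533528326 := by rw [he2]; nlinarith
  have e4lo : (0.01831563888 : ℝ) < Real.exp (-4) := by rw [he4]; nlinarith
  have e4hi : Real.exp (-4) < 0.0183156389 := by rw [he4]; nlinarith
  have heh : Real.exp (-(1/2)) * Real.exp (-(1/2)) = Real.exp (-1) := by
    rw [← Real.exp_add]; norm_num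
  have ehlo : (0.6065306 : ℝ) < Real.exp (-(1/2)) := by
    nlinarith [Real.exp_pos (-(1/2) : ℝ)]
  have ehhi : Real.exp (-(1/2)) < 0.6065307 := by
    nlinarith [Real.exp_pos (-(1/2) : ℝ)]
  -- split the integral
  have hx4 : x ≤ 4 := by linarith
  have hIoc : IntegrableOn (fun u : ℝ => Real.exp (-u) * Real.log u) (Ioc x 4) :=
    (integrableOn_exp_neg_log hx).mono_set Ioc_subset_Ioi_self
  have hIoi4 : IntegrableOn (fun u : ℝ => Real.exp (-u) * Real.log u) (Ioi 4) :=
    (integrableOn_exp_neg_log hx).mono_set (Ioi_subset_Ioi hx4)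
  have hunion : Ioc x 4 ∪ Ioi (4:ℝ) = Ioi x := Ioc_union_Ioi_eq_Ioi hx4
  have hsplit : (∫ u in Ioi x, Real.exp (-u) * Real.log u)
      = (∫ u in Ioc x 4, Real.exp (-u) * Real.log u)
        + ∫ u in Ioi 4, Real.exp (-u) * Real.log u := by
    rw [← hunion, setIntegral_union (Ioc_disjoint_Ioi le_rfl) measurableSet_Ioi hIoc hIoi4]
  -- tail bound
  have tail : (∫ u in Ioi 4, Real.exp (-u) * Real.log u) ≤ 0.02997 := by
    have hgint : IntegrableOn
        (fun u : ℝ => (1/4) * (u * Real.exp (-u)) + (2 * Real.log 2 - 1) * Real.exp (-u))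
        (Ioi 4) :=
      ((integrableOn_u_exp_neg (by norm_num : (0:ℝ) ≤ 4)).const_mul _).add
        ((integrableOn_exp_neg' (a := 4)).const_mul _)
    have hmono : (∫ u in Ioi 4, Real.exp (-u) * Real.log u)
        ≤ ∫ u in Ioi 4, ((1/4) * (u * Real.exp (-u)) + (2 * Real.log 2 - 1) * Real.exp (-u)) := by
      refine setIntegral_mono_on hIoi4 hgint measurableSet_Ioi fun u hu => ?_
      have hu0 : (0:ℝ) < u := by have := hu.out; linarith
      have hlog : Real.log u ≤ u/4 + (2 * Real.log 2 - 1) := by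
        have h1 : Real.log (u/4) ≤ u/4 - 1 := Real.log_le_sub_one_of_pos (by linarith)
        have h2 : Real.log (u/4) = Real.log u - Real.log 4 := Real.log_div (ne_of_gt hu0) (by norm_num)
        have h3 : Real.log 4 = 2 * Real.log 2 := by
          rw [show (4:ℝ) = 2^2 by norm_num, Real.log_pow]; push_cast; ring
        linarith
      calc Real.exp (-u) * Real.log u ≤ Real.exp (-u) * (u/4 + (2 * Real.log 2 - 1)) :=
            mul_le_mul_of_nonneg_left hlog (Real.exp_pos _).le
        _ = (1/4) * (u * Real.exp (-u)) + (2 * Real.log 2 - 1) * Real.exp (-u) := by ring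
    have hval : (∫ u in Ioi 4, ((1/4) * (u * Real.exp (-u)) + (2 * Real.log 2 - 1) * Real.exp (-u)))
        = (1/4) * (5 * Real.exp (-4)) + (2 * Real.log 2 - 1) * Real.exp (-4) := by
      rw [integral_add ((integrableOn_u_exp_neg (by norm_num : (0:ℝ) ≤ 4)).const_mul _)
        ((integrableOn_exp_neg' (a := 4)).const_mul _),
        MeasureTheory.integral_const_mul, MeasureTheory.integral_const_mul,
        int_Ioi_u_exp_neg (by norm_num : (0:ℝ) ≤ 4), integral_exp_neg_Ioi]
      norm_num
    refine hmono.trans (hval.le.trans ?_)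
    have hc : (0:ℝ) ≤ 2 * Real.log 2 - 1 := by linarith
    have h1 : (2 * Real.log 2 - 1) * Real.exp (-4) ≤ 0.3862943616 * 0.0183156389 := by nlinarith
    have h2 : (1/4 : ℝ) * (5 * Real.exp (-4)) ≤ (5/4) * 0.0183156389 := by linarith
    have h3 : (0.3862943616 : ℝ) * 0.0183156389 + (5/4) * 0.0183156389 ≤ 0.02997 := by norm_num
    linarith
  -- interval part
  have hio : (∫ u in Ioc x 4, Real.exp (-u) * Real.log u)
      = ∫ u in x..4, Real.exp (-u) * Real.log u :=
    (intervalIntegral.integral_of_le hx4).symm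
  -- adjacent splits
  have e1 : (∫ u in x..(1/5), Real.exp (-u) * Real.log u)
      + (∫ u in (1/5)..4, Real.exp (-u) * Real.log u)
      = ∫ u in x..4, Real.exp (-u) * Real.log u :=
    intervalIntegral.integral_add_adjacent_intervals
      (intervalIntegrable_exp_neg_log hx (by norm_num))
      (intervalIntegrable_exp_neg_log (by norm_num) (by norm_num))
  have e2 : (∫ u in (1/5 : ℝ)..(1/2), Real.exp (-u) * Real.log u)
      + (∫ u in (1/2 : ℝ)..4, Real.exp (-u) * Real.log u)
      = ∫ u in (1/5 : ℝ)..4, Real.exp (-u) * Real.log u :=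
    intervalIntegral.integral_add_adjacent_intervals
      (intervalIntegrable_exp_neg_log (by norm_num) (by norm_num))
      (intervalIntegrable_exp_neg_log (by norm_num) (by norm_num))
  have e3 : (∫ u in (1/2 : ℝ)..1, Real.exp (-u) * Real.log u)
      + (∫ u in (1 : ℝ)..4, Real.exp (-u) * Real.log u)
      = ∫ u in (1/2 : ℝ)..4, Real.exp (-u) * Real.log u :=
    intervalIntegral.integral_add_adjacent_intervals
      (intervalIntegrable_exp_neg_log (by norm_num) (by norm_num))
      (intervalIntegrable_exp_neg_log (by norm_num) (by norm_num))
  have e4 : (∫ u in (1 : ℝ)..2, Real.exp (-u) * Real.log u)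
      + (∫ u in (2 : ℝ)..4, Real.exp (-u) * Real.log u)
      = ∫ u in (1 : ℝ)..4, Real.exp (-u) * Real.log u :=
    intervalIntegral.integral_add_adjacent_intervals
      (intervalIntegrable_exp_neg_log (by norm_num) (by norm_num))
      (intervalIntegrable_exp_neg_log (by norm_num) (by norm_num))
  -- piece bounds
  have B1 : (∫ u in x..(1/5), Real.exp (-u) * Real.log u) ≤ 0 := by
    have h0 : (∫ u in x..(1/5), (0:ℝ)) = 0 := by simp
    rw [← h0]
    refine intervalIntegral.integral_mono_on (by linarith)
      (intervalIntegrable_exp_neg_log hx (by norm_num)) intervalIntegrable_const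
      fun u hu => ?_
    have hu0 : 0 < u := lt_of_lt_of_le hx hu.1
    have : Real.log u ≤ 0 := Real.log_nonpos hu0.le (by have := hu.2; linarith)
    exact mul_nonpos_of_nonneg_of_nonpos (Real.exp_pos _).le this
  have B2 : (∫ u in (1/5 : ℝ)..(1/2), Real.exp (-u) * Real.log u) ≤ -0.19367 := by
    have hmono : (∫ u in (1/5 : ℝ)..(1/2), Real.exp (-u) * Real.log u)
        ≤ ∫ u in (1/5 : ℝ)..(1/2), Real.exp (-(1/2)) * Real.log u := by
      refine intervalIntegral.integral_mono_on (by norm_num)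
        (intervalIntegrable_exp_neg_log (by norm_num) (by norm_num))
        (ContinuousOn.intervalIntegrable (ContinuousOn.mul continuousOn_const
          (Real.continuousOn_log.mono ?_))) fun u hu => ?_
      · intro u hu
        have : min (1/5 : ℝ) (1/2) ≤ u := hu.1
        have h0 : (0:ℝ) < u := lt_of_lt_of_le (by norm_num : (0:ℝ) < min (1/5) (1/2)) this
        simp [ne_of_gt h0]
      · have hu1 : (1/5 : ℝ) ≤ u := hu.1
        have hu2 : u ≤ (1/2 : ℝ) := hu.2
        have hlog : Real.log u ≤ 0 := Real.log_nonpos (by linarith) (by linarith)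
        have hexp : Real.exp (-(1/2)) ≤ Real.exp (-u) := Real.exp_le_exp.mpr (by linarith)
        exact mul_le_mul_of_nonpos_right hexp hlog
    have hval : (∫ u in (1/5 : ℝ)..(1/2), Real.exp (-(1/2)) * Real.log u)
        = Real.exp (-(1/2)) * ((1/2) * Real.log (1/2) - (1/5) * Real.log (1/5) - (1/2) + (1/5)) := by
      rw [intervalIntegral.integral_const_mul, integral_log]
    rw [hval] at hmono
    refine hmono.trans ?_
    have hl12 : Real.log (1/2 : ℝ) = -Real.log 2 := by
      rw [one_div, Real.log_inv]
    have hl15 : Real.log (1/5 : ℝ) = -Real.log 5 := by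
      rw [one_div, Real.log_inv]
    have hl5 : Real.log 5 = 2 * Real.log 2 + Real.log (5/4) := by
      rw [show (5:ℝ) = 2^2 * (5/4) by norm_num, Real.log_mul (by norm_num) (by norm_num),
        Real.log_pow]
      push_cast; ring
    have hl54 : Real.log (5/4 : ℝ) ≤ 1/4 := by
      have := Real.log_le_sub_one_of_pos (show (0:ℝ) < 5/4 by norm_num); linarith
    have hl54' : (0:ℝ) ≤ Real.log (5/4) := Real.log_nonneg (by norm_num)
    rw [hl12, hl15, hl5]
    have hA : (1/2 : ℝ) * -Real.log 2 - 1/5 * -(2 * Real.log 2 + Real.log (5/4)) - 1/2 + 1/5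
        ≤ -0.3193147 := by linarith
    have h1 : Real.exp (-(1/2)) * ((1/2 : ℝ) * -Real.log 2 - 1/5 * -(2 * Real.log 2 + Real.log (5/4)) - 1/2 + 1/5)
        ≤ Real.exp (-(1/2)) * (-0.3193147) :=
      mul_le_mul_of_nonneg_left hA (Real.exp_pos _).le
    have h2 : Real.exp (-(1/2)) * (-0.3193147) ≤ 0.6065306 * (-0.3193147) :=
      mul_le_mul_of_nonpos_right ehlo.le (by norm_num)
    have h3 : (0.6065306 : ℝ) * (-0.3193147) ≤ -0.19367 := by norm_num
    linarith
  have B3 : (∫ u in (1/2 : ℝ)..1, Real.exp (-u) * Real.log u) ≤ -0.056442 := by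
    have hmono : (∫ u in (1/2 : ℝ)..1, Real.exp (-u) * Real.log u)
        ≤ ∫ u in (1/2 : ℝ)..1, Real.exp (-1) * Real.log u := by
      refine intervalIntegral.integral_mono_on (by norm_num)
        (intervalIntegrable_exp_neg_log (by norm_num) (by norm_num))
        (ContinuousOn.intervalIntegrable (ContinuousOn.mul continuousOn_const
          (Real.continuousOn_log.mono ?_))) fun u hu => ?_
      · intro u hu
        have : min (1/2 : ℝ) 1 ≤ u := hu.1
        have h0 : (0:ℝ) < u := lt_of_lt_of_le (by norm_num : (0:ℝ) < min (1/2) 1) this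
        simp [ne_of_gt h0]
      · have hu1 : (1/2 : ℝ) ≤ u := hu.1
        have hu2 : u ≤ (1 : ℝ) := hu.2
        have hlog : Real.log u ≤ 0 := Real.log_nonpos (by linarith) (by linarith)
        have hexp : Real.exp (-1) ≤ Real.exp (-u) := Real.exp_le_exp.mpr (by linarith)
        exact mul_le_mul_of_nonpos_right hexp hlog
    have hval : (∫ u in (1/2 : ℝ)..1, Real.exp (-1) * Real.log u)
        = Real.exp (-1) * (1 * Real.log 1 - (1/2) * Real.log (1/2) - 1 + (1/2)) := by
      rw [intervalIntegral.integral_const_mul, integral_log]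
    rw [hval] at hmono
    refine hmono.trans ?_
    have hl12 : Real.log (1/2 : ℝ) = -Real.log 2 := by
      rw [one_div, Real.log_inv]
    rw [hl12, Real.log_one]
    have hA : (1 : ℝ) * 0 - 1/2 * -Real.log 2 - 1 + 1/2 ≤ -0.1534264 := by linarith
    have h1 : Real.exp (-1) * ((1 : ℝ) * 0 - 1/2 * -Real.log 2 - 1 + 1/2)
        ≤ Real.exp (-1) * (-0.1534264) :=
      mul_le_mul_of_nonneg_left hA (Real.exp_pos _).le
    have h2 : Real.exp (-1) * (-0.1534264) ≤ 0.36787944116 * (-0.1534264) :=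
      mul_le_mul_of_nonpos_right einv_lo.le (by norm_num)
    have h3 : (0.36787944116 : ℝ) * (-0.1534264) ≤ -0.056442 := by norm_num
    linarith
  have B4 : (∫ u in (1 : ℝ)..2, Real.exp (-u) * Real.log u) ≤ 0.082419 := by
    have hl32 : 2 * Real.log (3/2 : ℝ) = Real.log 2 + Real.log (9/8) := by
      rw [show Real.log 2 + Real.log (9/8) = Real.log (2 * (9/8)) from
        (Real.log_mul (by norm_num) (by norm_num)).symm,
        show (2 : ℝ) * (9/8) = (3/2)^2 by norm_num, Real.log_pow]
      push_cast; ring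
    have hl98 : Real.log (9/8 : ℝ) ≤ 1/8 := by
      have := Real.log_le_sub_one_of_pos (show (0:ℝ) < 9/8 by norm_num); linarith
    have hl98' : (0:ℝ) ≤ Real.log (9/8) := Real.log_nonneg (by norm_num)
    have hmono : (∫ u in (1 : ℝ)..2, Real.exp (-u) * Real.log u)
        ≤ ∫ u in (1 : ℝ)..2, ((2/3) * (u * Real.exp (-u)) + (Real.log (3/2) - 1) * Real.exp (-u)) := by
      refine intervalIntegral.integral_mono_on (by norm_num)
        (intervalIntegrable_exp_neg_log (by norm_num) (by norm_num))
        ((intervalIntegrable_u_exp_neg.const_mul _).add (intervalIntegrable_exp_neg.const_mul _))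
        fun u hu => ?_
      have hu1 : (1 : ℝ) ≤ u := hu.1
      have hlog : Real.log u ≤ (2/3) * u + (Real.log (3/2) - 1) := by
        have h1 : Real.log (u/(3/2)) ≤ u/(3/2) - 1 := Real.log_le_sub_one_of_pos (by positivity)
        have h2 : Real.log (u/(3/2)) = Real.log u - Real.log (3/2) :=
          Real.log_div (by linarith) (by norm_num)
        linarith
      calc Real.exp (-u) * Real.log u
          ≤ Real.exp (-u) * ((2/3) * u + (Real.log (3/2) - 1)) :=
            mul_le_mul_of_nonneg_left hlog (Real.exp_pos _).le
        _ = (2/3) * (u * Real.exp (-u)) + (Real.log (3/2) - 1) * Real.exp (-u) := by ring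
    have hval : (∫ u in (1 : ℝ)..2, ((2/3) * (u * Real.exp (-u)) + (Real.log (3/2) - 1) * Real.exp (-u)))
        = (2/3) * (2 * Real.exp (-1) - 3 * Real.exp (-2))
          + (Real.log (3/2) - 1) * (Real.exp (-1) - Real.exp (-2)) := by
      rw [intervalIntegral.integral_add (intervalIntegrable_u_exp_neg.const_mul _)
        (intervalIntegrable_exp_neg.const_mul _),
        intervalIntegral.integral_const_mul, intervalIntegral.integral_const_mul,
        int_u_exp_neg, int_exp_neg]
      norm_num
    rw [hval] at hmono
    refine hmono.trans ?_
    have hl32hi : Real.log (3/2 : ℝ) ≤ 0.4090735904 := by linarith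
    have hd : (0.2325441577 : ℝ) ≤ Real.exp (-1) - Real.exp (-2) := by linarith
    have hq : Real.log (3/2 : ℝ) - 1 ≤ -0.5909264096 := by linarith
    have h2 : (Real.log (3/2) - 1) * (Real.exp (-1) - Real.exp (-2))
        ≤ (-0.5909264096) * 0.2325441577 := by nlinarith
    have h1 : (2/3 : ℝ) * (2 * Real.exp (-1) - 3 * Real.exp (-2)) ≤ 0.2198353552 := by linarith
    have h3 : ((-0.5909264096) : ℝ) * 0.2325441577 ≤ -0.137416 := by norm_num
    linarith
  have B5 : (∫ u in (2 : ℝ)..4, Real.exp (-u) * Real.log u) ≤ 0.115674 := by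
    have hE : (0:ℝ) < Real.exp 1 := Real.exp_pos 1
    have hmono : (∫ u in (2 : ℝ)..4, Real.exp (-u) * Real.log u)
        ≤ ∫ u in (2 : ℝ)..4, (Real.exp 1)⁻¹ * (u * Real.exp (-u)) := by
      refine intervalIntegral.integral_mono_on (by norm_num)
        (intervalIntegrable_exp_neg_log (by norm_num) (by norm_num))
        (intervalIntegrable_u_exp_neg.const_mul _)
        fun u hu => ?_
      have hu1 : (2 : ℝ) ≤ u := hu.1
      have hlog : Real.log u ≤ (Real.exp 1)⁻¹ * u := by
        have h1 : Real.log (u/(Real.exp 1)) ≤ u/(Real.exp 1) - 1 :=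
          Real.log_le_sub_one_of_pos (by positivity)
        have h2 : Real.log (u/(Real.exp 1)) = Real.log u - 1 := by
          rw [Real.log_div (by linarith) (ne_of_gt hE), Real.log_exp]
        have h3 : Real.log u ≤ u / Real.exp 1 := by linarith
        rw [div_eq_inv_mul] at h3
        exact h3
      calc Real.exp (-u) * Real.log u ≤ Real.exp (-u) * ((Real.exp 1)⁻¹ * u) :=
            mul_le_mul_of_nonneg_left hlog (Real.exp_pos _).le
        _ = (Real.exp 1)⁻¹ * (u * Real.exp (-u)) := by ring
    have hval : (∫ u in (2 : ℝ)..4, (Real.exp 1)⁻¹ * (u * Real.exp (-u)))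
        = (Real.exp 1)⁻¹ * (3 * Real.exp (-2) - 5 * Real.exp (-4)) := by
      rw [intervalIntegral.integral_const_mul, int_u_exp_neg]
      norm_num
    rw [hval] at hmono
    refine hmono.trans ?_
    have hEinv : (Real.exp 1)⁻¹ = Real.exp (-1) := by
      rw [Real.exp_neg]
    rw [hEinv]
    have hA : 3 * Real.exp (-2) - 5 * Real.exp (-4) ≤ 0.3144276578 := by linarith
    have hA0 : (0:ℝ) ≤ 3 * Real.exp (-2) - 5 * Real.exp (-4) := by linarith
    have h1 : Real.exp (-1) * (3 * Real.exp (-2) - 5 * Real.exp (-4))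
        ≤ 0.3678794412 * 0.3144276578 := by nlinarith
    have h3 : (0.3678794412 : ℝ) * 0.3144276578 ≤ 0.115674 := by norm_num
    linarith
  -- combine
  rw [hsplit, hio, ← e1, ← e2, ← e3, ← e4]
  linarith


lemma integrableOn_exp_neg_rpow {x : ℝ} (hx : 0 < x) {c : ℝ} (hc : c ≤ 0) :
    IntegrableOn (fun u : ℝ => Real.exp (-u) * u ^ c) (Ioi x) := by
  refine Integrable.mono'
    (g := fun u : ℝ => x ^ c * Real.exp (-u))
    ((integrableOn_exp_neg' (a := x)).const_mul _)
    (((Real.measurable_exp.comp measurable_neg).mul (measurable_id.pow_const c)).aestronglyMeasurable)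
    ?_
  rw [ae_restrict_iff' measurableSet_Ioi]
  filter_upwards with u hu
  have hu0 : 0 < u := lt_trans hx hu
  have h1 : u ^ c ≤ x ^ c := Real.rpow_le_rpow_of_nonpos hx (le_of_lt hu) hc
  have h2 : (0:ℝ) ≤ u ^ c := Real.rpow_nonneg hu0.le c
  rw [norm_mul, Real.norm_eq_abs, Real.norm_eq_abs, abs_of_pos (Real.exp_pos _),
    abs_of_nonneg h2]
  calc Real.exp (-u) * u ^ c ≤ Real.exp (-u) * x ^ c :=
        mul_le_mul_of_nonneg_left h1 (Real.exp_pos _).le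
    _ = x ^ c * Real.exp (-u) := by ring

/-- Lemma 10 of the paper: for `0 < α ≤ 1` and `0 < x` with
`(2+x)·ln(2+x) − x·ln x ≤ 2`, the upper incomplete gamma function satisfies
`Γ(α, x) = ∫ₓ^∞ e^{−u} u^{α−1} du ≥ e^{−x}`. -/
theorem stmt_7 (α x : ℝ) (hα0 : 0 < α) (hα1 : α ≤ 1) (hx : 0 < x)
    (h : (2 + x) * Real.log (2 + x) - x * Real.log x ≤ 2) :
    (∫ u in Set.Ioi x, Real.exp (-u) * u ^ (α - 1)) ≥ Real.exp (-x) := by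
  have hx5 : x ≤ 1/5 := x_le_fifth hx h
  have hG : (∫ u in Ioi x, Real.exp (-u) * Real.log u) ≤ 0 := G_nonpos hx hx5
  have hint1 : IntegrableOn (fun u : ℝ => Real.exp (-u) * u ^ (α - 1)) (Ioi x) :=
    integrableOn_exp_neg_rpow hx (by linarith)
  have hint2 : IntegrableOn
      (fun u : ℝ => Real.exp (-u) + (α - 1) * (Real.exp (-u) * Real.log u)) (Ioi x) :=
    (integrableOn_exp_neg' (a := x)).add ((integrableOn_exp_neg_log hx).const_mul _)
  have hmono : (∫ u in Ioi x, Real.exp (-u) + (α - 1) * (Real.exp (-u) * Real.log u))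
      ≤ ∫ u in Ioi x, Real.exp (-u) * u ^ (α - 1) := by
    refine setIntegral_mono_on hint2 hint1 measurableSet_Ioi fun u hu => ?_
    have hu0 : 0 < u := lt_trans hx hu
    have hr : u ^ (α - 1) = Real.exp ((α - 1) * Real.log u) := by
      rw [Real.rpow_def_of_pos hu0, mul_comm]
    have he : 1 + (α - 1) * Real.log u ≤ Real.exp ((α - 1) * Real.log u) := by
      have := Real.add_one_le_exp ((α - 1) * Real.log u); linarith
    calc Real.exp (-u) + (α - 1) * (Real.exp (-u) * Real.log u)
        = Real.exp (-u) * (1 + (α - 1) * Real.log u) := by ring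
      _ ≤ Real.exp (-u) * Real.exp ((α - 1) * Real.log u) :=
          mul_le_mul_of_nonneg_left he (Real.exp_pos _).le
      _ = Real.exp (-u) * u ^ (α - 1) := by rw [hr]
  have hsplit : (∫ u in Ioi x, Real.exp (-u) + (α - 1) * (Real.exp (-u) * Real.log u))
      = Real.exp (-x) + (α - 1) * ∫ u in Ioi x, Real.exp (-u) * Real.log u := by
    rw [integral_add (integrableOn_exp_neg' (a := x)) ((integrableOn_exp_neg_log hx).const_mul _),
      integral_exp_neg_Ioi, MeasureTheory.integral_const_mul]
  have hfin : Real.exp (-x) ≤ Real.exp (-x) + (α - 1) * ∫ u in Ioi x, Real.exp (-u) * Real.log u := by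
    have : 0 ≤ (α - 1) * ∫ u in Ioi x, Real.exp (-u) * Real.log u :=
      mul_nonneg_of_nonpos_of_nonpos (by linarith : α - 1 ≤ 0) hG
    linarith
  rw [ge_iff_le]
  calc Real.exp (-x) ≤ _ := hfin
    _ = _ := hsplit.symm
    _ ≤ _ := hmono
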